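/- arXiv:1304.1226 — 2 statements merged into one kernel-verified Lean document; each statement's English description precedes it below -/
import Mathlib

section
/- Andrews' corrected identity holds for all natural numbers n: Σ_{j∈ℤ} C(n+1, 10j)₂ − Σ_{j∈ℤ} C(n+1, 10j+1)₂ = Fₙ·(Fₙ + 1)/2, where both sums have only finitely many nonzero terms (since C(n+1, m)₂ = 0 for |m| > n+1). -/
open LaurentPolynomial

/-- The trinomial coefficient `C(n, j)₂`: the coefficient of `x^j` in
`(x⁻¹ + 1 + x)^n`, viewed in the ring of Laurent polynomials `ℤ[T;T⁻¹]`. -/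
noncomputable def trinom (n : ℕ) (j : ℤ) : ℤ :=
  (AddMonoidAlgebra.coeff (((T (-1) + 1 + T 1 : ℤ[T;T⁻¹])) ^ n)) j

lemma trinom_neg (n : ℕ) (j : ℤ) : trinom n (-j) = trinom n j := by
  have h : invert (((T (-1) + 1 + T 1 : ℤ[T;T⁻¹])) ^ n)
      = ((T (-1) + 1 + T 1 : ℤ[T;T⁻¹])) ^ n := by
    rw [map_pow, map_add, map_add, map_one, invert_T, invert_T]
    ring_nf
  unfold trinom
  rw [← invert_apply, h]

lemma trinom_succ (n : ℕ) (j : ℤ) :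
    trinom (n + 1) j = trinom n (j - 1) + trinom n j + trinom n (j + 1) := by
  unfold trinom
  rw [pow_succ, mul_add, mul_add, mul_one]
  rw [AddMonoidAlgebra.coeff_add, AddMonoidAlgebra.coeff_add, Finsupp.add_apply, Finsupp.add_apply]
  have h1 : AddMonoidAlgebra.coeff (((T (-1) + 1 + T 1) ^ n * T (-1) : ℤ[T;T⁻¹])) j
      = AddMonoidAlgebra.coeff (((T (-1) + 1 + T 1 : ℤ[T;T⁻¹])) ^ n) (j + 1) := by
    have ht : (T (-1) : ℤ[T;T⁻¹]) = AddMonoidAlgebra.single (-1) 1 := rfl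
    rw [ht, AddMonoidAlgebra.coeff_mul_single_apply]
    simp [sub_neg_eq_add]
  have h2 : AddMonoidAlgebra.coeff (((T (-1) + 1 + T 1) ^ n * T 1 : ℤ[T;T⁻¹])) j
      = AddMonoidAlgebra.coeff (((T (-1) + 1 + T 1 : ℤ[T;T⁻¹])) ^ n) (j - 1) := by
    have ht : (T 1 : ℤ[T;T⁻¹]) = AddMonoidAlgebra.single 1 1 := rfl
    rw [ht, AddMonoidAlgebra.coeff_mul_single_apply]
    rw [mul_one, sub_eq_add_neg]
  rw [h1, h2]; ring

lemma trinom_supp_fin (n : ℕ) (r : ℤ) :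
    (Function.support fun j : ℤ => trinom n (10 * j + r)).Finite := by
  have hinj : Function.Injective (fun j : ℤ => 10 * j + r) := by
    intro a b h; simpa using h
  have hsub : (Function.support fun j : ℤ => trinom n (10 * j + r))
      ⊆ (fun j : ℤ => 10 * j + r) ⁻¹' ((((T (-1) + 1 + T 1 : ℤ[T;T⁻¹])) ^ n).coeff.support : Set ℤ) := by
    intro j hj
    simp only [Function.mem_support] at hj
    simpa [Finsupp.mem_support_iff, trinom] using hj
  exact Set.Finite.subset (Set.Finite.preimage hinj.injOn (Finset.finite_toSet _)) hsub

/-- Sum of trinomial coefficients in residue class `r` mod 10. -/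
noncomputable def S (n : ℕ) (r : ℤ) : ℤ := ∑ᶠ j : ℤ, trinom n (10 * j + r)

lemma S_succ (n : ℕ) (r : ℤ) :
    S (n + 1) r = S n (r - 1) + S n r + S n (r + 1) := by
  unfold S
  have e1 : ∀ j : ℤ, trinom (n+1) (10 * j + r)
      = trinom n (10 * j + (r - 1)) + trinom n (10 * j + r) + trinom n (10 * j + (r + 1)) := by
    intro j
    rw [trinom_succ]
    ring_nf
  rw [finsum_congr e1]
  rw [finsum_add_distrib (Set.Finite.subset (Set.Finite.union (trinom_supp_fin n (r-1)) (trinom_supp_fin n r)) (by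
        intro j hj
        simp only [Function.mem_support] at hj
        by_contra hc
        simp only [Set.mem_union, Function.mem_support, not_or, not_not] at hc
        omega)) (trinom_supp_fin n (r+1)),
     finsum_add_distrib (trinom_supp_fin n (r-1)) (trinom_supp_fin n r)]

lemma S_shift (n : ℕ) (r : ℤ) : S n (r + 10) = S n r := by
  unfold S
  calc ∑ᶠ j : ℤ, trinom n (10 * j + (r + 10))
      = ∑ᶠ j : ℤ, (fun x : ℤ => trinom n (10 * x + r)) ((Equiv.addRight (1:ℤ)) j) := by
        refine finsum_congr fun j => ?_
        simp only [Equiv.coe_addRight]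
        ring_nf
    _ = ∑ᶠ j : ℤ, (fun x : ℤ => trinom n (10 * x + r)) j :=
        finsum_comp_equiv (Equiv.addRight (1:ℤ)) (f := fun x : ℤ => trinom n (10 * x + r))
    _ = ∑ᶠ j : ℤ, trinom n (10 * j + r) := rfl

lemma S_neg (n : ℕ) (r : ℤ) : S n (-r) = S n r := by
  unfold S
  calc ∑ᶠ j : ℤ, trinom n (10 * j + (-r))
      = ∑ᶠ j : ℤ, (fun x : ℤ => trinom n (10 * x + r)) ((Equiv.neg ℤ) j) := by
        refine finsum_congr fun j => ?_
        simp only [Equiv.neg_apply]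
        rw [← trinom_neg n (10 * (-j) + r)]
        ring_nf
    _ = ∑ᶠ j : ℤ, (fun x : ℤ => trinom n (10 * x + r)) j :=
        finsum_comp_equiv (Equiv.neg ℤ) (f := fun x : ℤ => trinom n (10 * x + r))
    _ = ∑ᶠ j : ℤ, trinom n (10 * j + r) := rfl

/-- The five closed forms, proved simultaneously by induction. -/
lemma key (n : ℕ) :
    2 * (S n 0 - S n 1) = ((Nat.fib (n+1) : ℤ) - Nat.fib n)^2 + ((Nat.fib (n+1) : ℤ) - Nat.fib n) ∧
    2 * (S n 1 - S n 2) = (Nat.fib n : ℤ)^2 + Nat.fib n ∧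
    2 * (S n 2 - S n 3) = 2 * (Nat.fib n : ℤ) * ((Nat.fib (n+1) : ℤ) - Nat.fib n) ∧
    2 * (S n 3 - S n 4) = (Nat.fib n : ℤ)^2 - Nat.fib n ∧
    2 * (S n 4 - S n 5) = ((Nat.fib (n+1) : ℤ) - Nat.fib n)^2 - ((Nat.fib (n+1) : ℤ) - Nat.fib n) := by
  induction n with
  | zero =>
      have h0 : S 0 0 = 1 := by
        unfold S
        have e : ∀ j : ℤ, trinom 0 (10 * j + 0) = if (0:ℤ) = 10 * j + 0 then 1 else 0 := by
          intro j
          simp only [trinom, pow_zero, AddMonoidAlgebra.one_def, AddMonoidAlgebra.coeff_single]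
          exact Finsupp.single_apply
        rw [finsum_congr e]
        rw [finsum_eq_single _ (0:ℤ) (fun j hj => by rw [if_neg (by omega)])]
        norm_num
      have hr : ∀ r : ℤ, r ≠ 0 → -6 < r → r < 6 → S 0 r = 0 := by
        intro r hr0 hb1 hb2
        unfold S
        apply finsum_eq_zero_of_forall_eq_zero
        intro j
        simp only [trinom, pow_zero, AddMonoidAlgebra.one_def, AddMonoidAlgebra.coeff_single]
        rw [Finsupp.single_apply, if_neg (by omega)]
      rw [h0, hr 1 (by norm_num) (by norm_num) (by norm_num),
          hr 2 (by norm_num) (by norm_num) (by norm_num),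
          hr 3 (by norm_num) (by norm_num) (by norm_num),
          hr 4 (by norm_num) (by norm_num) (by norm_num),
          hr 5 (by norm_num) (by norm_num) (by norm_num)]
      norm_num
  | succ n ih =>
      obtain ⟨h0, h1, h2, h3, h4⟩ := ih
      have sm1 : S n (-1) = S n 1 := S_neg n 1
      have s6 : S n 6 = S n 4 := by
        have h := S_shift n (-4)
        rw [S_neg n 4] at h
        norm_num at h
        exact h
      have e0 : S (n+1) 0 = S n 1 + S n 0 + S n 1 := by
        have h := S_succ n 0; norm_num at h; rw [sm1] at h; exact h
      have e1 : S (n+1) 1 = S n 0 + S n 1 + S n 2 := by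
        have h := S_succ n 1; norm_num at h; exact h
      have e2 : S (n+1) 2 = S n 1 + S n 2 + S n 3 := by
        have h := S_succ n 2; norm_num at h; exact h
      have e3 : S (n+1) 3 = S n 2 + S n 3 + S n 4 := by
        have h := S_succ n 3; norm_num at h; exact h
      have e4 : S (n+1) 4 = S n 3 + S n 4 + S n 5 := by
        have h := S_succ n 4; norm_num at h; exact h
      have e5 : S (n+1) 5 = S n 4 + S n 5 + S n 4 := by
        have h := S_succ n 5; norm_num at h; rw [s6] at h; exact h
      have hfib : (Nat.fib (n+1+1) : ℤ) = Nat.fib n + Nat.fib (n+1) := by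
        rw [Nat.fib_add_two]; push_cast; ring
      refine ⟨?_, ?_, ?_, ?_, ?_⟩
      · rw [hfib, e0, e1]; linear_combination h1
      · rw [e1, e2]; linear_combination h0 + h1 + h2
      · rw [hfib, e2, e3]; linear_combination h1 + h2 + h3
      · rw [e3, e4]; linear_combination h2 + h3 + h4
      · rw [hfib, e4, e5]; linear_combination h3

/-- Andrews' corrected identity. -/
theorem andrews_identity (n : ℕ) :
    (∑ᶠ j : ℤ, trinom (n + 1) (10 * j)) - (∑ᶠ j : ℤ, trinom (n + 1) (10 * j + 1)) =
      (Nat.fib n : ℤ) * ((Nat.fib n : ℤ) + 1) / 2 := by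
  have h0 : (∑ᶠ j : ℤ, trinom (n + 1) (10 * j)) = S (n+1) 0 := by
    unfold S
    exact finsum_congr fun j => by norm_num
  have hkey := (key (n+1)).1
  have hfib : (Nat.fib (n+1+1) : ℤ) = Nat.fib n + Nat.fib (n+1) := by
    rw [Nat.fib_add_two]; push_cast; ring
  rw [hfib] at hkey
  have h2 : (Nat.fib n : ℤ) * ((Nat.fib n : ℤ) + 1) = 2 * (S (n+1) 0 - S (n+1) 1) := by
    linear_combination -hkey
  rw [h0]
  show S (n+1) 0 - S (n+1) 1 = _
  rw [h2, Int.mul_ediv_cancel_left _ (by norm_num)]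
end

section
/- Let P be a Laurent polynomial with integer coefficients, let k ≥ 1 be an integer, define A(n, k, a) := Σ_{j∈ℤ} [coefficient of x^(kj+a) in Pⁿ] for 0 ≤ a < k, and let f_{k,a}(t) := Σ_{n≥0} A(n, k, a) tⁿ ∈ ℤ[[t]]. Then all k generating functions f_{k,a} are rational with a common denominator: there exists a polynomial D(t) ∈ ℤ[t] with D(0) = 1 and deg D ≤ k, and for each a a polynomial N_a(t) ∈ ℤ[t] with deg N_a < k, such that D(t) · f_{k,a}(t) = N_a(t) as formal power series in ℤ[[t]]. -/
open LaurentPolynomial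

/-- The generalized Euler–Andrews sum `A(n, k, a) = Σ_{j∈ℤ} [coefficient of x^(kj+a) in Pⁿ]`,
where the coefficients are taken in the ring of Laurent polynomials `ℤ[T;T⁻¹]`. -/
noncomputable def genA (P : ℤ[T;T⁻¹]) (k : ℕ) (n : ℕ) (a : ℤ) : ℤ :=
  ∑ᶠ j : ℤ, AddMonoidAlgebra.coeff (P ^ n) ((k : ℤ) * j + a)

/-- The generating function `f_{k,a}(t) = Σ_{n≥0} A(n,k,a) tⁿ` in `ℤ[[t]]`. -/
noncomputable def genF (P : ℤ[T;T⁻¹]) (k : ℕ) (a : ℤ) : PowerSeries ℤ :=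
  PowerSeries.mk fun n => genA P k n a

open Finset Polynomial in
private lemma mapDomain_zmod_apply (k : ℕ) (hk : 1 ≤ k) (v : ℤ →₀ ℤ) (a : ℤ) :
    ∑ᶠ j : ℤ, v ((k : ℤ) * j + a)
      = Finsupp.mapDomain (fun m : ℤ => (m : ZMod k)) v ((a : ZMod k)) := by
  classical
  have hk0 : (k : ℤ) ≠ 0 := by exact_mod_cast (by omega : k ≠ 0)
  -- RHS as a filtered sum
  have hR : Finsupp.mapDomain (fun m : ℤ => (m : ZMod k)) v ((a : ZMod k))
      = ∑ m ∈ v.support.filter (fun m : ℤ => ((m : ZMod k) = (a : ZMod k))), v m := by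
    rw [Finsupp.mapDomain, Finsupp.sum_apply]
    rw [Finsupp.sum]
    rw [Finset.sum_filter]
    refine Finset.sum_congr rfl fun m _ => ?_
    rw [Finsupp.single_apply]
  set S := v.support.filter (fun m : ℤ => ((m : ZMod k) = (a : ZMod k))) with hS
  have hL : ∑ᶠ j : ℤ, v ((k : ℤ) * j + a) = ∑ j ∈ S.image (fun m => (m - a) / k), v ((k:ℤ) * j + a) := by
    apply finsum_eq_sum_of_support_subset
    intro j hj
    simp only [Function.mem_support] at hj
    simp only [Finset.coe_image, Set.mem_image, Finset.mem_coe]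
    refine ⟨(k:ℤ) * j + a, ?_, ?_⟩
    · rw [hS, Finset.mem_filter, Finsupp.mem_support_iff]
      refine ⟨hj, ?_⟩
      push_cast
      simp [ZMod.natCast_self]
    · rw [add_sub_cancel_right, Int.mul_ediv_cancel_left _ hk0]
  rw [hL, hR]
  rw [Finset.sum_image]
  · apply Finset.sum_congr rfl
    intro m hm
    rw [hS, Finset.mem_filter] at hm
    have hdvd : (k : ℤ) ∣ m - a := by
      have := hm.2
      rwa [← sub_eq_zero, ← Int.cast_sub, ZMod.intCast_zmod_eq_zero_iff_dvd] at this
    congr 1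
    rw [mul_comm, Int.ediv_mul_cancel hdvd, sub_add_cancel]
  · intro x hx y hy hxy
    rw [hS, Finset.mem_coe, Finset.mem_filter] at hx hy
    have hx' : (k : ℤ) ∣ x - a := by
      have := hx.2
      rwa [← sub_eq_zero, ← Int.cast_sub, ZMod.intCast_zmod_eq_zero_iff_dvd] at this
    have hy' : (k : ℤ) ∣ y - a := by
      have := hy.2
      rwa [← sub_eq_zero, ← Int.cast_sub, ZMod.intCast_zmod_eq_zero_iff_dvd] at this
    have := congrArg (· * (k:ℤ)) hxy
    simp only at this
    rw [Int.ediv_mul_cancel hx', Int.ediv_mul_cancel hy'] at this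
    omega

open Finset Polynomial in
/-- All `k` generating functions `f_{k,a}` are rational, with a common denominator of
degree at most  and numerators of degree less than . -/
theorem genF_rational (P : ℤ[T;T⁻¹]) (k : ℕ) (hk : 1 ≤ k) :
    ∃ D : Polynomial ℤ, D.coeff 0 = 1 ∧ D.natDegree ≤ k ∧
      ∀ a : ℤ, 0 ≤ a → a < (k : ℤ) →
        ∃ N : Polynomial ℤ, N.natDegree < k ∧
          (D : PowerSeries ℤ) * genF P k a = (N : PowerSeries ℤ) := by
  classical
  obtain ⟨k₀, rfl⟩ : ∃ k₀, k = k₀ + 1 := ⟨k - 1, by omega⟩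
  set k := k₀ + 1
  haveI : NeZero k := ⟨by omega⟩
  haveI : Module.Free ℤ (AddMonoidAlgebra ℤ (ZMod k)) :=
    Module.Free.of_equiv (AddMonoidAlgebra.coeffLinearEquiv ℤ).symm
  haveI : Module.Finite ℤ (AddMonoidAlgebra ℤ (ZMod k)) :=
    Module.Finite.equiv (AddMonoidAlgebra.coeffLinearEquiv ℤ).symm
  have hfr : Module.finrank ℤ (AddMonoidAlgebra ℤ (ZMod k)) = k := by
    have h1 : Module.finrank ℤ ((ZMod k) →₀ ℤ) = Fintype.card (ZMod k) := by
      simp [Module.finrank_finsupp_self]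
    have h2 : Fintype.card (ZMod k) = k := ZMod.card k
    exact (AddMonoidAlgebra.coeffLinearEquiv ℤ).finrank_eq.trans (h1.trans h2)
  set Q : AddMonoidAlgebra ℤ (ZMod k) :=
    AddMonoidAlgebra.mapDomainRingHom ℤ (Int.castAddHom (ZMod k)) P with hQdef
  set L : Module.End ℤ (AddMonoidAlgebra ℤ (ZMod k)) :=
    (Algebra.lmul ℤ (AddMonoidAlgebra ℤ (ZMod k))) Q with hLdef
  set χ : Polynomial ℤ := L.charpoly with hχ
  have hmon : χ.Monic := L.charpoly_monic
  have hdeg : χ.natDegree = k := by rw [hχ, L.charpoly_natDegree, hfr]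
  have haev : Polynomial.aeval Q χ = 0 := by
    have h := L.aeval_self_charpoly
    rw [hLdef, Polynomial.aeval_algHom_apply] at h
    have h1 := congrArg (fun f : Module.End ℤ (AddMonoidAlgebra ℤ (ZMod k)) => f 1) h
    rw [hχ, hLdef]; simpa using h1
  refine ⟨χ.reverse, ?_, ?_, ?_⟩
  · rw [Polynomial.coeff_zero_reverse]; exact hmon
  · exact (Polynomial.reverse_natDegree_le χ).trans (le_of_eq hdeg)
  intro a _ _
  -- coefficients of the generating function
  have hc : ∀ n, genA P k n a = (Q ^ n).coeff ((a : ZMod k)) := by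
    intro n
    rw [genA, mapDomain_zmod_apply k (by omega) (P ^ n).coeff a, hQdef, ← map_pow]
    simp only [AddMonoidAlgebra.mapDomainRingHom_apply]
    rfl
  -- the key vanishing of high coefficients
  have hvan : ∀ m, k ≤ m →
      PowerSeries.coeff m ((χ.reverse : PowerSeries ℤ) * genF P k a) = 0 := by
    intro m hm
    rw [PowerSeries.coeff_mul, Finset.Nat.sum_antidiagonal_eq_sum_range_succ_mk]
    have hDdeg : χ.reverse.natDegree ≤ k := (Polynomial.reverse_natDegree_le χ).trans hdeg.le
    have hstep1 : ∑ i ∈ range (m + 1),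
        (PowerSeries.coeff i) (χ.reverse : PowerSeries ℤ) *
          (PowerSeries.coeff (m - i)) (genF P k a)
        = ∑ i ∈ range (k + 1), χ.reverse.coeff i * (Q ^ (m - i)).coeff ((a : ZMod k)) := by
      have e1 : ∑ i ∈ range (m + 1),
          (PowerSeries.coeff i) (χ.reverse : PowerSeries ℤ) *
            (PowerSeries.coeff (m - i)) (genF P k a)
          = ∑ i ∈ range (m + 1), χ.reverse.coeff i * (Q ^ (m - i)).coeff ((a : ZMod k)) := by
        refine Finset.sum_congr rfl fun i _ => ?_
        rw [Polynomial.coeff_coe, genF, PowerSeries.coeff_mk, hc]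
      rw [e1]
      refine (Finset.sum_subset (Finset.range_subset_range.mpr (by omega)) ?_).symm
      intro i _ hi
      rw [Finset.mem_range, not_lt] at hi
      rw [Polynomial.coeff_eq_zero_of_natDegree_lt (lt_of_le_of_lt hDdeg (by omega)), zero_mul]
    rw [hstep1, ← Finset.sum_range_reflect]
    have hstep2 : ∀ j ∈ range (k + 1),
        χ.reverse.coeff (k + 1 - 1 - j) * (Q ^ (m - (k + 1 - 1 - j))).coeff ((a : ZMod k))
          = (χ.coeff j • Q ^ (m - k + j)).coeff ((a : ZMod k)) := by
      intro j hj
      rw [Finset.mem_range] at hj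
      have hj' : j ≤ k := by omega
      have h1 : k + 1 - 1 - j = k - j := by omega
      have h2 : m - (k - j) = m - k + j := by omega
      have h3 : χ.reverse.coeff (k - j) = χ.coeff j := by
        rw [Polynomial.coeff_reverse, hdeg, Polynomial.revAt_le (by omega)]
        congr 1; omega
      rw [h1, h2, h3, AddMonoidAlgebra.coeff_smul_apply, smul_eq_mul]
    rw [Finset.sum_congr rfl hstep2, ← Finsupp.finset_sum_apply, ← AddMonoidAlgebra.coeff_sum]
    have hzero : ∑ j ∈ range (k + 1), χ.coeff j • Q ^ (m - k + j) = 0 := by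
      have : ∑ j ∈ range (k + 1), χ.coeff j • Q ^ (m - k + j)
          = Q ^ (m - k) * ∑ j ∈ range (k + 1), χ.coeff j • Q ^ j := by
        rw [Finset.mul_sum]
        refine Finset.sum_congr rfl fun j _ => ?_
        rw [pow_add, mul_smul_comm]
      rw [this, ← Polynomial.aeval_eq_sum_range' (n := k + 1) (by omega), haev, mul_zero]
    rw [hzero]
    rfl
  refine ⟨PowerSeries.trunc k ((χ.reverse : PowerSeries ℤ) * genF P k a), ?_, ?_⟩
  · exact PowerSeries.natDegree_trunc_lt _ _
  · ext m
    rw [Polynomial.coeff_coe, PowerSeries.coeff_trunc]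
    split_ifs with h
    · rfl
    · rw [hvan m (by omega)]
end
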